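/- arXiv:2209.11603 — 2 statements merged into one kernel-verified Lean document; each statement's English description precedes it below -/
import Mathlib

section
/- Let V, Q be real vector spaces, m and n symmetric positive semidefinite bilinear forms on V and Q defining E(v,q) := m(v,v) + n(q,q), b : V × Q → ℝ bilinear, and r : V × V → ℝ a bilinear form with r(v,v) ≥ 0 for all v. Suppose u : ℝ → V and p : ℝ → Q are differentiable and satisfy for all t: m(u'(t), v) + b(v, p(t)) + r(u(t), v) = 0 for all v ∈ V, and n(p'(t), q) − b(u(t), q) = 0 for all q ∈ Q. Then t ↦ E(u(t), p(t)) is nonincreasing; if moreover r = 0, then E(u(t), p(t)) = E(u(0), p(0)) for all t ≥ 0. -/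
/-- Semi-discrete energy law for the mixed wave system. -/
theorem semidiscrete_energy_law
    {V Q : Type*} [NormedAddCommGroup V] [NormedSpace ℝ V]
    [NormedAddCommGroup Q] [NormedSpace ℝ Q]
    (m : V →L[ℝ] V →L[ℝ] ℝ) (n : Q →L[ℝ] Q →L[ℝ] ℝ)
    (b : V →L[ℝ] Q →L[ℝ] ℝ) (r : V →L[ℝ] V →L[ℝ] ℝ)
    (hmsym : ∀ x y : V, m x y = m y x)
    (hnsym : ∀ x y : Q, n x y = n y x)
    (hmpos : ∀ v : V, 0 ≤ m v v)
    (hnpos : ∀ q : Q, 0 ≤ n q q)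
    (hrpos : ∀ v : V, 0 ≤ r v v)
    (E : V → Q → ℝ)
    (hE : ∀ v q, E v q = m v v + n q q)
    (u : ℝ → V) (p : ℝ → Q) (u' : ℝ → V) (p' : ℝ → Q)
    (hu : ∀ t, HasDerivAt u (u' t) t)
    (hp : ∀ t, HasDerivAt p (p' t) t)
    (heq1 : ∀ t, ∀ v : V, m (u' t) v + b v (p t) + r (u t) v = 0)
    (heq2 : ∀ t, ∀ q : Q, n (p' t) q - b (u t) q = 0) :
    (∀ s t : ℝ, s ≤ t → E (u t) (p t) ≤ E (u s) (p s))
    ∧ (r = 0 → ∀ t : ℝ, 0 ≤ t → E (u t) (p t) = E (u 0) (p 0)) := by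
  set f : ℝ → ℝ := fun t => m (u t) (u t) + n (p t) (p t) with hf
  have hderiv : ∀ t, HasDerivAt f (-2 * r (u t) (u t)) t := by
    intro t
    have h1 : HasDerivAt (fun t => m (u t) (u t))
        (m (u' t) (u t) + m (u t) (u' t)) t := by
      have hc : HasDerivAt (fun t => m (u t)) (m (u' t)) t :=
        (m.hasFDerivAt.comp_hasDerivAt t (hu t))
      exact hc.clm_apply (hu t)
    have h2 : HasDerivAt (fun t => n (p t) (p t))
        (n (p' t) (p t) + n (p t) (p' t)) t := by
      have hc : HasDerivAt (fun t => n (p t)) (n (p' t)) t :=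
        (n.hasFDerivAt.comp_hasDerivAt t (hp t))
      exact hc.clm_apply (hp t)
    have h := h1.add h2
    have e1 := heq1 t (u t)
    have e2 := heq2 t (p t)
    have hms := hmsym (u t) (u' t)
    have hns := hnsym (p t) (p' t)
    have : m (u' t) (u t) + m (u t) (u' t) + (n (p' t) (p t) + n (p t) (p' t))
        = -2 * r (u t) (u t) := by
      rw [hms, hns]; linarith
    rwa [this] at h
  have hdiff : Differentiable ℝ f := fun t => (hderiv t).differentiableAt
  have hderiv' : ∀ t, deriv f t = -2 * r (u t) (u t) := fun t => (hderiv t).deriv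
  have hanti : Antitone f := by
    apply antitone_of_deriv_nonpos hdiff
    intro t
    rw [hderiv' t]
    have := hrpos (u t)
    linarith
  constructor
  · intro s t hst
    rw [hE, hE]
    exact hanti hst
  · intro hr t _
    rw [hE, hE]
    have : f t = f 0 := by
      apply is_const_of_deriv_eq_zero hdiff
      intro x
      rw [hderiv' x, hr]
      simp
    exact this
end

section
/- Let V, Q be real vector spaces, n symmetric positive semidefinite bilinear form on Q, m symmetric bilinear form on V with m(v,v) ≥ 0, b : V × Q → ℝ bilinear, F : ℝ → Q* with n-dual bound |F(t)(q)| ≤ g(t)·√(n(q,q)) for an integrable g ≥ 0. If u, p are differentiable with m(u',v) + b(v,p) = 0 for all v and n(p',q) − b(u,q) = F(t)(q) for all q, and E(t) := √(m(u(t),u(t)) + n(p(t),p(t))), then for all t ∈ [0,T], E(t) ≤ E(0) + ∫₀ᵗ g(s) ds. -/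
/-- Abstract stability estimate for the mixed wave system with source term. -/
theorem mixed_wave_stability
    {V Q : Type*} [NormedAddCommGroup V] [NormedSpace ℝ V]
    [NormedAddCommGroup Q] [NormedSpace ℝ Q]
    (m : V →L[ℝ] V →L[ℝ] ℝ) (n : Q →L[ℝ] Q →L[ℝ] ℝ)
    (b : V →L[ℝ] Q →L[ℝ] ℝ)
    (hmsym : ∀ x y : V, m x y = m y x)
    (hnsym : ∀ x y : Q, n x y = n y x)
    (hmpos : ∀ v : V, 0 ≤ m v v)
    (hnpos : ∀ q : Q, 0 ≤ n q q)
    (T : ℝ) (hT : 0 ≤ T)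
    (F : ℝ → Q →L[ℝ] ℝ) (g : ℝ → ℝ)
    (hg : ∀ t, 0 ≤ g t)
    (hgint : IntervalIntegrable g MeasureTheory.volume 0 T)
    (hF : ∀ t, ∀ q : Q, |F t q| ≤ g t * Real.sqrt (n q q))
    (u : ℝ → V) (p : ℝ → Q) (u' : ℝ → V) (p' : ℝ → Q)
    (hu : ∀ t, HasDerivAt u (u' t) t)
    (hp : ∀ t, HasDerivAt p (p' t) t)
    (heq1 : ∀ t, ∀ v : V, m (u' t) v + b v (p t) = 0)
    (heq2 : ∀ t, ∀ q : Q, n (p' t) q - b (u t) q = F t q)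
    (E : ℝ → ℝ)
    (hE : ∀ t, E t = Real.sqrt (m (u t) (u t) + n (p t) (p t))) :
    ∀ t ∈ Set.Icc (0:ℝ) T, E t ≤ E 0 + ∫ s in (0:ℝ)..t, g s := by
  intro t ht
  obtain ⟨ht0, htT⟩ := ht
  set φ : ℝ → ℝ := fun s => m (u s) (u s) + n (p s) (p s) with hφdef
  have hφnn : ∀ s, 0 ≤ φ s := fun s => add_nonneg (hmpos _) (hnpos _)
  have hd : ∀ s, HasDerivAt φ (2 * F s (p s)) s := by
    intro s
    have h1 : HasDerivAt (fun r => m (u r) (u r)) (m (u' s) (u s) + m (u s) (u' s)) s :=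
      (m.hasFDerivAt.comp_hasDerivAt s (hu s)).clm_apply (hu s)
    have h2 : HasDerivAt (fun r => n (p r) (p r)) (n (p' s) (p s) + n (p s) (p' s)) s :=
      (n.hasFDerivAt.comp_hasDerivAt s (hp s)).clm_apply (hp s)
    have h3 := h1.add h2
    have e1 : m (u' s) (u s) + b (u s) (p s) = 0 := heq1 s (u s)
    have e2 : n (p' s) (p s) - b (u s) (p s) = F s (p s) := heq2 s (p s)
    have hsm : m (u s) (u' s) = m (u' s) (u s) := hmsym _ _
    have hsn : n (p s) (p' s) = n (p' s) (p s) := hnsym _ _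
    have h4 : 2 * F s (p s) = m (u' s) (u s) + m (u s) (u' s) + (n (p' s) (p s) + n (p s) (p' s)) := by
      rw [hsm, hsn]
      linarith
    rw [h4]
    exact h3
  have hgint' : IntervalIntegrable g MeasureTheory.volume 0 t :=
    hgint.mono_set (Set.uIcc_subset_uIcc (Set.left_mem_uIcc)
      (by rw [Set.uIcc_of_le hT]; exact ⟨ht0, htT⟩))
  have hφdiff : Differentiable ℝ φ := fun s => (hd s).differentiableAt
  have hφcont : Continuous φ := hφdiff.continuous
  have key : ∀ ε : ℝ, 0 < ε → E t ≤ (E 0 + ∫ s in (0:ℝ)..t, g s) + ε := by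
    intro ε hε
    have hpos : ∀ s, 0 < φ s + ε ^ 2 := fun s => by nlinarith [hφnn s]
    set f : ℝ → ℝ := fun s => Real.sqrt (φ s + ε ^ 2) with hfdef
    set f' : ℝ → ℝ := fun s => F s (p s) / Real.sqrt (φ s + ε ^ 2) with hf'def
    have hf : ∀ s, HasDerivAt f (f' s) s := by
      intro s
      have h := (Real.hasDerivAt_sqrt (ne_of_gt (hpos s))).comp s ((hd s).add_const (ε ^ 2))
      have hs : Real.sqrt (φ s + ε ^ 2) ≠ 0 :=
        ne_of_gt (Real.sqrt_pos.mpr (hpos s))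
      have h5 : f' s = 1 / (2 * Real.sqrt (φ s + ε ^ 2)) * (2 * F s (p s)) := by
        simp only [hf'def]
        field_simp
      rw [h5]
      exact h
    have hbound : ∀ s, |f' s| ≤ g s := by
      intro s
      have hs : 0 < Real.sqrt (φ s + ε ^ 2) := Real.sqrt_pos.mpr (hpos s)
      have h1 : |F s (p s)| ≤ g s * Real.sqrt (n (p s) (p s)) := hF s _
      have h2 : Real.sqrt (n (p s) (p s)) ≤ Real.sqrt (φ s + ε ^ 2) :=
        Real.sqrt_le_sqrt (by simp only [hφdef]; nlinarith [hmpos (u s)])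
      rw [hf'def]
      rw [abs_div, abs_of_pos hs, div_le_iff₀ hs]
      calc |F s (p s)| ≤ g s * Real.sqrt (n (p s) (p s)) := h1
        _ ≤ g s * Real.sqrt (φ s + ε ^ 2) := by
            exact mul_le_mul_of_nonneg_left h2 (hg s)
    have hdm : Measurable fun s => F s (p s) := by
      have heqd : (fun s => F s (p s)) = fun s => deriv φ s / 2 := by
        funext s; rw [(hd s).deriv]; ring
      rw [heqd]
      exact (measurable_deriv φ).div_const 2
    have hmeasf' : Measurable f' :=
      hdm.div ((hφcont.add continuous_const).sqrt.measurable)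
    have hintf' : IntervalIntegrable f' MeasureTheory.volume 0 t := by
      apply hgint'.mono_fun hmeasf'.aestronglyMeasurable
      filter_upwards with s
      rw [Real.norm_eq_abs, Real.norm_eq_abs, abs_of_nonneg (hg s)]
      exact hbound s
    have hFTC : ∫ s in (0:ℝ)..t, f' s = f t - f 0 :=
      intervalIntegral.integral_eq_sub_of_hasDerivAt (fun s _ => hf s) hintf'
    have hmono : (∫ s in (0:ℝ)..t, f' s) ≤ ∫ s in (0:ℝ)..t, g s :=
      intervalIntegral.integral_mono_on ht0 hintf' hgint'
        (fun s _ => (le_abs_self _).trans (hbound s))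
    have hEt : E t ≤ f t := by
      rw [hE t]
      exact Real.sqrt_le_sqrt (by simp only [hφdef]; nlinarith [sq_nonneg ε])
    have hE0 : f 0 ≤ E 0 + ε := by
      rw [hE 0]
      have h0 : φ 0 + ε ^ 2 ≤ (Real.sqrt (φ 0) + ε) ^ 2 := by
        nlinarith [Real.sq_sqrt (hφnn 0), Real.sqrt_nonneg (φ 0)]
      calc f 0 ≤ Real.sqrt ((Real.sqrt (φ 0) + ε) ^ 2) := Real.sqrt_le_sqrt h0
        _ = Real.sqrt (φ 0) + ε := Real.sqrt_sq (by positivity)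
    linarith
  exact le_of_forall_pos_le_add key
end
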